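/- Let μ be a Borel probability measure on a compact metric space X. If there exists a Borel set Λ with μ(Λ) > 0 such that for every x ∈ Λ there is a decreasing sequence ρ_n(x) → 0 with log ρ_{n+1}(x)/log ρ_n(x) → 1 and a ≤ liminf_n [log μ(B(x, ρ_n(x))) / log ρ_n(x)] for all x ∈ Λ, then dim_H(μ) ≥ a, where dim_H(μ) := inf{ dim_H(Z) : Z Borel, μ(Z) = 1 }. -/

import Mathlib

open MeasureTheory Filter Metric Set ENNReal Topology

lemma mass_dist {X : Type*} [MetricSpace X] [MeasurableSpace X] [BorelSpace X]
    (μ : Measure X) (s : ℝ) (hs : 0 < s) (E : Set X) (c : ℝ) (hc : 0 < c)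
    (hE : ∀ x ∈ E, ∀ r : ℝ, 0 < r → r ≤ c → μ (ball x r) ≤ ENNReal.ofReal (r ^ s)) :
    (ENNReal.ofReal (2 ^ s))⁻¹ * μ E ≤ μH[s] E := by
  have h2ne : ENNReal.ofReal (2 ^ s) ≠ 0 := by
    simp [ENNReal.ofReal_eq_zero, not_le]; positivity
  have h2nt : ENNReal.ofReal (2 ^ s) ≠ ∞ := ENNReal.ofReal_ne_top
  have key : ∀ (t : ℕ → Set X), (E ⊆ ⋃ n, t n) →
      (∀ n, EMetric.diam (t n) ≤ ENNReal.ofReal (c / 2)) →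
      μ E ≤ ENNReal.ofReal (2 ^ s) *
        ∑' n, ⨆ _ : (t n).Nonempty, EMetric.diam (t n) ^ s := by
    intro t hcov hdiam
    have h2 : ∀ n, μ (t n ∩ E) ≤
        ENNReal.ofReal (2 ^ s) * ⨆ _ : (t n).Nonempty, EMetric.diam (t n) ^ s := by
      intro n
      rcases (t n ∩ E).eq_empty_or_nonempty with h | ⟨x, hxt, hxE⟩
      · simp [h]
      have hne : (t n).Nonempty := ⟨x, hxt⟩
      rw [iSup_pos hne]
      set d := EMetric.diam (t n) with hd
      have hdlt : d ≠ ∞ := ((hdiam n).trans_lt ENNReal.ofReal_lt_top).ne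
      rcases eq_or_ne d 0 with hd0 | hd0
      · -- degenerate: t n is a subsingleton
        have hsub : ∀ r : ℝ, 0 < r → t n ⊆ ball x r := by
          intro r hr y hy
          have h1 : edist y x ≤ d := EMetric.edist_le_diam_of_mem hy hxt
          rw [hd0, nonpos_iff_eq_zero, edist_eq_zero] at h1
          simpa [h1] using hr
        have hten : Tendsto (fun r : ℝ => ENNReal.ofReal (r ^ s)) (𝓝[>] 0) (𝓝 0) := by
          have h1 : Tendsto (fun r : ℝ => r ^ s) (𝓝 0) (𝓝 0) := by
            have := (Real.continuousAt_rpow_const 0 s (Or.inr hs.le)).tendsto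
            simpa [Real.zero_rpow hs.ne'] using this
          have := (ENNReal.continuous_ofReal.tendsto 0).comp h1
          simpa [Function.comp_def] using this.mono_left nhdsWithin_le_nhds
        have hev : ∀ᶠ r in 𝓝[>] (0:ℝ), μ (t n ∩ E) ≤ ENNReal.ofReal (r ^ s) := by
          filter_upwards [Ioc_mem_nhdsGT_of_mem (Set.mem_Ico.2 ⟨le_refl (0:ℝ), hc⟩)] with r hr
          exact le_trans (measure_mono (inter_subset_left.trans (hsub r hr.1)))
            (hE x hxE r hr.1 hr.2)
        have : μ (t n ∩ E) ≤ 0 := ge_of_tendsto hten hev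
        exact le_trans this zero_le
      · have hdR : 0 < d.toReal := ENNReal.toReal_pos hd0 hdlt
        have hsub : t n ⊆ ball x (2 * d.toReal) := by
          intro y hy
          have h1 : edist y x ≤ d := EMetric.edist_le_diam_of_mem hy hxt
          have h2 : dist y x ≤ d.toReal := by
            rw [dist_edist]; exact ENNReal.toReal_mono hdlt h1
          exact mem_ball.2 (lt_of_le_of_lt h2 (by linarith))
        have hRc : 2 * d.toReal ≤ c := by
          have h3 := ENNReal.toReal_mono ENNReal.ofReal_ne_top (hdiam n)
          rw [ENNReal.toReal_ofReal (by linarith)] at h3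
          linarith
        calc μ (t n ∩ E) ≤ μ (ball x (2 * d.toReal)) :=
              measure_mono (inter_subset_left.trans hsub)
          _ ≤ ENNReal.ofReal ((2 * d.toReal) ^ s) := hE x hxE _ (by positivity) hRc
          _ = ENNReal.ofReal (2 ^ s) * d ^ s := by
              rw [Real.mul_rpow (by norm_num) hdR.le,
                ENNReal.ofReal_mul (by positivity),
                ← ENNReal.ofReal_rpow_of_pos hdR, ENNReal.ofReal_toReal hdlt]
    calc μ E ≤ μ (⋃ n, t n ∩ E) := by
          refine measure_mono fun x hx => ?_
          rcases Set.mem_iUnion.1 (hcov hx) with ⟨n, hn⟩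
          exact Set.mem_iUnion.2 ⟨n, hn, hx⟩
      _ ≤ ∑' n, μ (t n ∩ E) := measure_iUnion_le _
      _ ≤ ∑' n, ENNReal.ofReal (2 ^ s) *
            ⨆ _ : (t n).Nonempty, EMetric.diam (t n) ^ s := ENNReal.tsum_le_tsum h2
      _ = _ := ENNReal.tsum_mul_left
  rw [MeasureTheory.Measure.hausdorffMeasure_apply]
  have hr0 : (0:ℝ≥0∞) < ENNReal.ofReal (c / 2) := by
    simp [ENNReal.ofReal_pos]; positivity
  refine le_trans ?_ (le_iSup₂ (ENNReal.ofReal (c / 2)) hr0)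
  refine le_iInf fun t => le_iInf fun hcov => le_iInf fun hdiam => ?_
  calc (ENNReal.ofReal (2 ^ s))⁻¹ * μ E
      ≤ (ENNReal.ofReal (2 ^ s))⁻¹ * (ENNReal.ofReal (2 ^ s) *
        ∑' n, ⨆ _ : (t n).Nonempty, EMetric.diam (t n) ^ s) :=
        mul_le_mul_right (key t hcov hdiam) _
    _ = _ := by rw [← mul_assoc, ENNReal.inv_mul_cancel h2ne h2nt, one_mul]; rfl


lemma pointwise {X : Type*} [MetricSpace X] [MeasurableSpace X]
    (μ : Measure X) [IsProbabilityMeasure μ]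
    (a s t : ℝ) (hs : 0 < s) (hst : s < t) (hta : t < a) (x : X)
    (ρ : ℕ → ℝ) (hρpos : ∀ n, 0 < ρ n) (hanti : Antitone ρ)
    (hρ0 : Tendsto ρ atTop (nhds 0))
    (hratio : Tendsto (fun n => Real.log (ρ (n + 1)) / Real.log (ρ n)) atTop (nhds 1))
    (hlim : a ≤ atTop.liminf
      (fun n => Real.log (μ (ball x (ρ n))).toReal / Real.log (ρ n))) :
    ∃ m : ℕ, ∀ r : ℝ, 0 < r → r ≤ 1 / (m + 1) →
      μ (ball x r) ≤ ENNReal.ofReal (r ^ s) := by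
  have hlt1 : ∀ᶠ n in atTop, ρ n < 1 := hρ0.eventually_lt_const one_pos
  set L : ℕ → ℝ := fun n => Real.log (μ (ball x (ρ n))).toReal / Real.log (ρ n) with hL
  have hlogneg : ∀ n, ρ n < 1 → Real.log (ρ n) < 0 := fun n h => Real.log_neg (hρpos n) h
  have hMle : ∀ n, Real.log (μ (ball x (ρ n))).toReal ≤ 0 := by
    intro n
    apply Real.log_nonpos ENNReal.toReal_nonneg
    exact ENNReal.toReal_le_of_le_ofReal one_pos.le (by simpa using prob_le_one)
  have h0 : ∀ᶠ n in atTop, 0 ≤ L n := by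
    filter_upwards [hlt1] with n hn
    exact div_nonneg_of_nonpos (hMle n) (hlogneg n hn).le
  have hLt : ∀ᶠ n in atTop, t < L n :=
    eventually_lt_of_lt_liminf (lt_of_lt_of_le hta hlim)
      (isBoundedUnder_of_eventually_ge (a := 0) h0)
  have hμle : ∀ᶠ n in atTop, μ (ball x (ρ n)) ≤ ENNReal.ofReal (ρ n ^ t) := by
    filter_upwards [hlt1, hLt] with n h1 h2
    have hln : Real.log (ρ n) < 0 := hlogneg n h1
    have h3 : Real.log (μ (ball x (ρ n))).toReal < t * Real.log (ρ n) := by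
      have := (lt_div_iff_of_neg hln).1 h2
      linarith
    have h4 : (μ (ball x (ρ n))).toReal ≤ ρ n ^ t := by
      rcases eq_or_lt_of_le (ENNReal.toReal_nonneg (a := μ (ball x (ρ n)))) with hM | hM
      · rw [← hM]; exact Real.rpow_nonneg (hρpos n).le t
      · rw [Real.rpow_def_of_pos (hρpos n)]
        calc (μ (ball x (ρ n))).toReal
            = Real.exp (Real.log (μ (ball x (ρ n))).toReal) := (Real.exp_log hM).symm
          _ ≤ Real.exp (Real.log (ρ n) * t) :=
              Real.exp_le_exp.2 (by linarith)
    calc μ (ball x (ρ n)) = ENNReal.ofReal (μ (ball x (ρ n))).toReal :=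
          (ENNReal.ofReal_toReal (measure_ne_top μ _)).symm
      _ ≤ ENNReal.ofReal (ρ n ^ t) := ENNReal.ofReal_le_ofReal h4
  have hrat : ∀ᶠ n in atTop, Real.log (ρ (n + 1)) / Real.log (ρ n) < t / s :=
    hratio.eventually_lt_const ((one_lt_div hs).2 hst)
  obtain ⟨N, hN⟩ := (hlt1.and (hμle.and hrat)).exists_forall_of_atTop
  obtain ⟨m, hm⟩ := exists_nat_one_div_lt (hρpos N)
  refine ⟨m, fun r hr hrle => ?_⟩
  have hrN : r < ρ N := lt_of_le_of_lt (by exact_mod_cast hrle) hm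
  have hex : ∃ k, ρ k < r := (hρ0.eventually_lt_const hr).exists
  set K := Nat.find hex with hK
  have hKlt : ρ K < r := Nat.find_spec hex
  have hNK : N < K := by
    by_contra h
    push_neg at h
    exact absurd (lt_trans hKlt hrN) (not_lt.2 (hanti h))
  set n := K - 1 with hn
  have hn1 : n + 1 = K := Nat.succ_pred_eq_of_pos (Nat.lt_of_le_of_lt (Nat.zero_le N) hNK)
  have hnN : N ≤ n := Nat.le_pred_of_lt hNK
  have hrn : r ≤ ρ n := not_lt.1 (Nat.find_min hex (by omega))
  have hρ1r : ρ (n + 1) < r := by rw [hn1]; exact hKlt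
  obtain ⟨hρn1, hμn, hratn⟩ := hN n hnN
  have hkey : ρ n ^ t ≤ ρ (n + 1) ^ s := by
    have hln : Real.log (ρ n) < 0 := hlogneg n hρn1
    have h2 : t / s * Real.log (ρ n) < Real.log (ρ (n + 1)) :=
      (div_lt_iff_of_neg hln).1 hratn
    have h3 : t * Real.log (ρ n) ≤ s * Real.log (ρ (n + 1)) := by
      have := mul_lt_mul_of_pos_left h2 hs
      rw [← mul_assoc, mul_div_cancel₀ _ hs.ne'] at this
      linarith
    rw [Real.rpow_def_of_pos (hρpos n), Real.rpow_def_of_pos (hρpos (n + 1))]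
    exact Real.exp_le_exp.2 (by linarith)
  calc μ (ball x r) ≤ μ (ball x (ρ n)) := measure_mono (ball_subset_ball hrn)
    _ ≤ ENNReal.ofReal (ρ n ^ t) := hμn
    _ ≤ ENNReal.ofReal (r ^ s) := by
        apply ENNReal.ofReal_le_ofReal
        exact le_trans hkey (Real.rpow_le_rpow (hρpos _).le hρ1r.le hs.le)

/-- Young's lower bound for the dimension of a measure:
`dim_H(μ) := inf { dim_H Z : Z Borel, μ Z = 1 } ≥ a` as soon as some Borel set
of positive measure carries the pointwise local estimates. -/
theorem stmt_8 {X : Type*} [MetricSpace X] [CompactSpace X] [MeasurableSpace X]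
    [BorelSpace X] (μ : Measure X) [IsProbabilityMeasure μ]
    (Λ : Set X) (hΛ : MeasurableSet Λ) (hΛpos : 0 < μ Λ) (a : ℝ)
    (H : ∀ x ∈ Λ, ∃ ρ : ℕ → ℝ,
      (∀ n, 0 < ρ n) ∧ Antitone ρ ∧
      Tendsto ρ atTop (nhds 0) ∧
      Tendsto (fun n => Real.log (ρ (n + 1)) / Real.log (ρ n)) atTop (nhds 1) ∧
      a ≤ atTop.liminf
        (fun n => Real.log (μ (ball x (ρ n))).toReal / Real.log (ρ n))) :
    ENNReal.ofReal a ≤ ⨅ (Z : Set X) (_ : MeasurableSet Z) (_ : μ Z = 1), dimH Z := by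
  refine le_iInf fun Z => le_iInf fun hZm => le_iInf fun hZ1 => ?_
  rcases le_or_gt a 0 with ha | ha
  · simpa [ENNReal.ofReal_eq_zero.2 ha] using zero_le
  refine ENNReal.le_of_forall_nnreal_lt fun q hq => ?_
  rcases eq_or_ne q 0 with rfl | hq0
  · simp
  have hqa : (q : ℝ) < a := by
    rwa [← ENNReal.ofReal_coe_nnreal, ENNReal.ofReal_lt_ofReal_iff ha] at hq
  set s : ℝ := (q : ℝ) with hsdef
  have hs : 0 < s := NNReal.coe_pos.2 (pos_iff_ne_zero.2 hq0)
  set t : ℝ := (s + a) / 2 with htdef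
  have hst : s < t := by rw [htdef]; linarith
  have hta : t < a := by rw [htdef]; linarith
  have hZc : μ Zᶜ = 0 := by
    have h1 := measure_compl hZm (measure_ne_top μ Z)
    rw [hZ1, measure_univ] at h1
    simpa using h1
  have hmeas : 0 < μ (Λ ∩ Z) := by rwa [measure_inter_conull hZc]
  set E : ℕ → Set X := fun m => {x | x ∈ Λ ∩ Z ∧ ∀ r : ℝ, 0 < r → r ≤ 1 / (m + 1) →
    μ (ball x r) ≤ ENNReal.ofReal (r ^ s)} with hE
  have hcov : Λ ∩ Z ⊆ ⋃ m, E m := by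
    intro x hx
    obtain ⟨ρ, h1, h2, h3, h4, h5⟩ := H x hx.1
    obtain ⟨m, hm⟩ := pointwise μ a s t hs hst hta x ρ h1 h2 h3 h4 h5
    exact Set.mem_iUnion.2 ⟨m, hx, hm⟩
  have hex : ∃ m, μ (E m) ≠ 0 := by
    by_contra h
    push_neg at h
    have h1 := (measure_mono hcov).trans (measure_iUnion_le (μ := μ) E)
    simp [h] at h1
    exact absurd h1 hmeas.ne'
  obtain ⟨m, hm⟩ := hex
  have hcm : (0:ℝ) < 1 / (m + 1) := by positivity
  have hmd := mass_dist μ s hs (E m) (1 / (m + 1)) hcm (fun x hx => hx.2)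
  have hHne : μH[s] (E m) ≠ 0 := by
    intro h0
    rw [h0] at hmd
    have h1 : (ENNReal.ofReal (2 ^ s))⁻¹ * μ (E m) = 0 := le_antisymm hmd zero_le
    rcases mul_eq_zero.1 h1 with h | h
    · exact (ENNReal.inv_ne_zero.2 ENNReal.ofReal_ne_top) h
    · exact hm h
  have hZne : μH[s] Z ≠ 0 := by
    intro h0
    exact hHne (le_antisymm (h0 ▸ measure_mono fun x hx => hx.1.2) zero_le)
  exact le_dimH_of_hausdorffMeasure_ne_zero hZne
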